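/- Let Q be a finite connected quandle and a ∈ Q. Then the subgroup of Equiv.Perm Q generated by the set {g * (L a) * g⁻¹ * (L a)⁻¹ : g ∈ Dis(Q)} equals Dis(Q). (In the paper's notation: [Dis(Q), conjugation by L a] = Dis(Q).) -/
import Mathlib


open Quandles

/-- Left multiplication by `a` as a permutation of the quandle. -/
def QL {Q : Type*} [Quandle Q] (a : Q) : Equiv.Perm Q := Rack.act' a

/-- The displacement group of a quandle: the subgroup of `Equiv.Perm Q`
generated by `{L a * (L b)⁻¹ : a, b ∈ Q}`. -/
def Dis (Q : Type*) [Quandle Q] : Subgroup (Equiv.Perm Q) :=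
  Subgroup.closure {g : Equiv.Perm Q | ∃ a b : Q, g = QL a * (QL b)⁻¹}

lemma conj_QL {Q : Type*} [Quandle Q] :
    ∀ g ∈ Subgroup.closure {g : Equiv.Perm Q | ∃ x : Q, g = QL x},
      ∀ a : Q, g * QL a * g⁻¹ = QL (g a) := by
  intro g hg
  induction hg using Subgroup.closure_induction with
  | mem x hx =>
      obtain ⟨y, rfl⟩ := hx
      intro a
      simp only [QL]
      rw [← Rack.ad_conj, Rack.act'_apply]
  | one => intro a; simp
  | mul x y hx hy ihx ihy =>
      intro a
      have : (x * y) * QL a * (x * y)⁻¹ = x * (y * QL a * y⁻¹) * x⁻¹ := by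
        group
      rw [this, ihy a, ihx (y a)]
      rfl
  | inv x hx ih =>
      intro a
      have h := ih (x⁻¹ a)
      have hx' : x (x⁻¹ a) = a := by simp
      rw [hx'] at h
      have : QL (x⁻¹ a) = x⁻¹ * QL a * x := by
        rw [← h]; group
      rw [this]; group

lemma Dis_le_inn {Q : Type*} [Quandle Q] :
    Dis Q ≤ Subgroup.closure {g : Equiv.Perm Q | ∃ x : Q, g = QL x} := by
  apply Subgroup.closure_le _ |>.2
  rintro g ⟨a, b, rfl⟩
  exact mul_mem (Subgroup.subset_closure ⟨a, rfl⟩)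
    (inv_mem (Subgroup.subset_closure ⟨b, rfl⟩))

theorem stmt1 (Q : Type*) [Quandle Q] [Finite Q]
    (hconn : ∀ x y : Q, ∃ g ∈ Dis Q, g x = y) (a : Q) :
    Subgroup.closure
        {g : Equiv.Perm Q | ∃ h ∈ Dis Q, g = h * QL a * h⁻¹ * (QL a)⁻¹} = Dis Q := by
  apply le_antisymm
  · apply Subgroup.closure_le _ |>.2
    rintro g ⟨h, hh, rfl⟩
    have := conj_QL h (Dis_le_inn hh) a
    rw [show h * QL a * h⁻¹ * (QL a)⁻¹ = (h * QL a * h⁻¹) * (QL a)⁻¹ by group, this]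
    exact Subgroup.subset_closure ⟨h a, a, rfl⟩
  · apply Subgroup.closure_le _ |>.2
    rintro g ⟨b, c, rfl⟩
    have key : ∀ x : Q, QL x * (QL a)⁻¹ ∈ Subgroup.closure
        {g : Equiv.Perm Q | ∃ h ∈ Dis Q, g = h * QL a * h⁻¹ * (QL a)⁻¹} := by
      intro x
      obtain ⟨h, hh, hx⟩ := hconn a x
      have := conj_QL h (Dis_le_inn hh) a
      rw [hx] at this
      rw [← this]
      exact Subgroup.subset_closure ⟨h, hh, by group⟩
    have : QL b * (QL c)⁻¹ = (QL b * (QL a)⁻¹) * (QL c * (QL a)⁻¹)⁻¹ := by group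
    rw [this]
    exact mul_mem (key b) (inv_mem (key c))
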